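/- If T is a junction tree of CDC(S) and an edge e of T partitions T into subtrees T1 and T2 with vertex sets S1 and S2 respectively, then T1 is a junction tree of CDC(S1) and T2 is a junction tree of CDC(S2). -/

import Mathlib

/-- A junction tree for a labeled collection of finite index sets. -/
def IsJunctionTree {ι α : Type*} [DecidableEq α] (G : SimpleGraph ι)
    (f : ι → Finset α) : Prop :=
  G.IsTree ∧ ∀ (i j : ι) (p : G.Walk i j), p.IsPath →
    (∀ x ∈ p.support, f i ∩ f j ⊆ f x) ∧
    (∀ a b : ι, s(a, b) ∈ p.edges → f i ∩ f j ⊆ f a ∩ f b)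

/-- Lift a walk whose support lies in `s` to the induced graph on `s`. -/
def SimpleGraph.Walk.toInduce {V : Type*} {G : SimpleGraph V} {s : Set V} :
    ∀ {u v : V} (p : G.Walk u v) (h : ∀ x ∈ p.support, x ∈ s),
      (G.induce s).Walk ⟨u, h u p.start_mem_support⟩ ⟨v, h v p.end_mem_support⟩
  | _, _, .nil, _ => .nil
  | _, _, .cons ha p, h =>
      .cons (by exact ha) (p.toInduce fun x hx => h x (by simp [hx]))

private lemma aux_junction {ι : Type*} [DecidableEq ι] {α : Type*} [DecidableEq α]
    (f : ι → Finset α) (T G : SimpleGraph ι) (hle : G ≤ T)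
    (hT : IsJunctionTree T f) (A : ι) :
    IsJunctionTree (SimpleGraph.induce {C | G.Reachable A C} G)
      (fun C => f (C : ι)) := by
  set s : Set ι := {C | G.Reachable A C}
  let φ : G.induce s →g T :=
    (SimpleGraph.Hom.ofLE hle).comp (SimpleGraph.Embedding.induce s).toHom
  have hφ : Function.Injective φ := Subtype.val_injective
  have hφval : ∀ x : s, φ x = (x : ι) := fun _ => rfl
  constructor
  · constructor
    · -- connected
      have hA : A ∈ s := SimpleGraph.Reachable.refl A
      have key : ∀ C : s, (G.induce s).Reachable ⟨A, hA⟩ C := by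
        rintro ⟨C, hC⟩
        obtain ⟨p⟩ := hC
        have hsupp : ∀ x ∈ p.support, x ∈ s := fun x hx => ⟨p.takeUntil x hx⟩
        exact ⟨p.toInduce hsupp⟩
      haveI : Nonempty s := ⟨⟨A, hA⟩⟩
      exact ⟨fun x y => (key x).symm.trans (key y)⟩
    · -- acyclic
      intro v p hp
      exact hT.1.IsAcyclic (p.map φ) (hp.map hφ)
  · intro i j p hp
    have hq := hT.2 i j (p.map φ) (p.map_isPath_of_injective hφ hp)
    refine ⟨fun x hx => ?_, fun a b hab => ?_⟩
    · have : (x : ι) ∈ (p.map φ).support := by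
        rw [SimpleGraph.Walk.support_map]
        exact List.mem_map.2 ⟨x, hx, rfl⟩
      exact hq.1 _ this
    · have : s((a : ι), (b : ι)) ∈ (p.map φ).edges := by
        rw [SimpleGraph.Walk.edges_map]
        exact List.mem_map.2 ⟨s(a, b), hab, rfl⟩
      exact hq.2 _ _ this

/-- If `T` is a junction tree of `CDC(𝒮)` and deleting an edge
`e = s(A, B)` of `T` yields the two subtrees `T1`, `T2` with vertex sets `𝒮1`
(the component of `A`) and `𝒮2` (the component of `B`), then `T1` is a junction
tree of `CDC(𝒮1)` and `T2` is a junction tree of `CDC(𝒮2)`. -/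
theorem junctionTree_subtrees {α : Type*} [DecidableEq α]
    (𝒮 : Finset (Finset α)) (T : SimpleGraph {S // S ∈ 𝒮})
    (hT : IsJunctionTree T (fun S => (S : Finset α)))
    (A B : {S // S ∈ 𝒮}) (hAB : T.Adj A B) :
    IsJunctionTree
      (SimpleGraph.induce {C | (T.deleteEdges {s(A, B)}).Reachable A C}
        (T.deleteEdges {s(A, B)}))
      (fun C => ((C : {S // S ∈ 𝒮}) : Finset α)) ∧
    IsJunctionTree
      (SimpleGraph.induce {C | (T.deleteEdges {s(A, B)}).Reachable B C}
        (T.deleteEdges {s(A, B)}))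
      (fun C => ((C : {S // S ∈ 𝒮}) : Finset α)) :=
  ⟨aux_junction _ T _ (SimpleGraph.deleteEdges_le _) hT A,
   aux_junction _ T _ (SimpleGraph.deleteEdges_le _) hT B⟩
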